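/- For signed graphs (G,σ) and (H,π), (G,σ) admits a homomorphism to (H,π) if and only if (G,σ) admits an edge-sign preserving homomorphism to the double switching graph DSG(H,π). -/

import Mathlib

open SimpleGraph

/-- The sign of a walk in a signed graph `(G, σ)`: the product of the signs of its edges,
counted with multiplicity. -/
def walkSign {V : Type*} {G : SimpleGraph V} (σ : Sym2 V → ℤˣ) {u v : V}
    (w : G.Walk u v) : ℤˣ :=
  (w.edges.map σ).prod

/-- A homomorphism of signed graphs: a graph homomorphism which preserves the signs of
closed walks. -/
def IsSignedHom {U V : Type*} (G : SimpleGraph U) (σ : Sym2 U → ℤˣ)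
    (H : SimpleGraph V) (π : Sym2 V → ℤˣ) (f : G →g H) : Prop :=
  ∀ (u : U) (w : G.Walk u u), walkSign π (w.map f) = walkSign σ w

/-- `(G, σ)` admits a homomorphism to `(H, π)`. -/
def SignedHom {U V : Type*} (G : SimpleGraph U) (σ : Sym2 U → ℤˣ)
    (H : SimpleGraph V) (π : Sym2 V → ℤˣ) : Prop :=
  ∃ f : G →g H, IsSignedHom G σ H π f

/-- An edge-sign preserving homomorphism: a graph homomorphism `φ : G → H` with
`π(φ(u)φ(v)) = σ(uv)` for every edge `uv` of `G`. -/
def IsESPHom {U V : Type*} (G : SimpleGraph U) (σ : Sym2 U → ℤˣ)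
    (H : SimpleGraph V) (π : Sym2 V → ℤˣ) (f : G →g H) : Prop :=
  ∀ u v : U, G.Adj u v → π s(f u, f v) = σ s(u, v)

/-- `(G, σ)` admits an edge-sign preserving homomorphism to `(H, π)`. -/
def ESPHom {U V : Type*} (G : SimpleGraph U) (σ : Sym2 U → ℤˣ)
    (H : SimpleGraph V) (π : Sym2 V → ℤˣ) : Prop :=
  ∃ f : G →g H, IsESPHom G σ H π f

/-- The underlying graph of the double switching graph `DSG(H, π)`: two copies `x⁺, x⁻` of each
vertex `x` (encoded as `(x, 1)` and `(x, -1)`), with `(x, s)` adjacent to `(y, t)` iff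
`x` is adjacent to `y` in `H`. -/
def DSGGraph {V : Type*} (H : SimpleGraph V) : SimpleGraph (V × ℤˣ) where
  Adj a b := H.Adj a.1 b.1
  symm := ⟨fun _ _ h => H.adj_symm h⟩
  loopless := ⟨fun a h => H.irrefl h⟩

/-- The signature of the double switching graph `DSG(H, π)`: the edge from `(x, s)` to `(y, t)`
carries the sign `s * t * π(xy)`; i.e. edges between the two copies of `H` have the sign of the
original edge, while crossing edges carry the opposite sign. -/
def DSGSign {V : Type*} (π : Sym2 V → ℤˣ) : Sym2 (V × ℤˣ) → ℤˣ :=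
  Sym2.lift ⟨fun a b => a.2 * b.2 * π s(a.1, b.1), by
    intro a b
    dsimp only
    rw [Sym2.eq_swap, mul_comm a.2 b.2]⟩

section aux
variable {V : Type*} {G : SimpleGraph V} (σ : Sym2 V → ℤˣ)

lemma walkSign_nil {u : V} : walkSign σ (Walk.nil : G.Walk u u) = 1 := rfl

lemma walkSign_cons {u v w : V} (h : G.Adj u v) (p : G.Walk v w) :
    walkSign σ (Walk.cons h p) = σ s(u, v) * walkSign σ p := by
  simp [walkSign]

lemma walkSign_append {u v w : V} (p : G.Walk u v) (q : G.Walk v w) :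
    walkSign σ (p.append q) = walkSign σ p * walkSign σ q := by
  simp [walkSign]

lemma walkSign_reverse {u v : V} (p : G.Walk u v) :
    walkSign σ p.reverse = walkSign σ p := by
  simp [walkSign, List.prod_reverse]

lemma walkSign_copy {u v u' v' : V} (p : G.Walk u v) (hu : u = u') (hv : v = v') :
    walkSign σ (p.copy hu hv) = walkSign σ p := by
  subst hu hv; rfl

end aux

lemma DSGSign_mk {V : Type*} (π : Sym2 V → ℤˣ) (a b : V × ℤˣ) :
    DSGSign π s(a, b) = a.2 * b.2 * π s(a.1, b.1) := rfl

lemma units_key2 (Su Sv Pu Pv p s : ℤˣ) (h : Pu * (p * Pv) = Su * (s * Sv)) :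
    Su * Pu * (Sv * Pv) * p = s := by
  rcases Int.units_eq_one_or Su with rfl | rfl <;>
  rcases Int.units_eq_one_or Sv with rfl | rfl <;>
  rcases Int.units_eq_one_or Pu with rfl | rfl <;>
  rcases Int.units_eq_one_or Pv with rfl | rfl <;>
  simp_all [mul_comm, mul_assoc, mul_left_comm]

lemma units_key3 (A B W P S R : ℤˣ) (h : A * B * P = S) :
    P * (B * W * R) = A * W * (S * R) := by
  subst h
  rcases Int.units_eq_one_or A with rfl | rfl <;>
  rcases Int.units_eq_one_or B with rfl | rfl <;>
  simp [mul_comm, mul_assoc, mul_left_comm]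

/-- `(G, σ)` admits a homomorphism to `(H, π)` iff `(G, σ)` admits an edge-sign preserving
homomorphism to the double switching graph `DSG(H, π)`. -/
theorem signedHom_iff_espHom_DSG {U V : Type*}
    (G : SimpleGraph U) (σ : Sym2 U → ℤˣ) (H : SimpleGraph V) (π : Sym2 V → ℤˣ) :
    SignedHom G σ H π ↔ ESPHom G σ (DSGGraph H) (DSGSign π) := by
  constructor
  · rintro ⟨f, hf⟩
    have reach : ∀ u : U, G.Reachable (G.connectedComponentMk u).out u :=
      fun u => ConnectedComponent.exact (Quot.out_eq _)
    let wk : ∀ u : U, G.Walk (G.connectedComponentMk u).out u := fun u => (reach u).some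
    let sgn : U → ℤˣ := fun u => walkSign σ (wk u) * walkSign π ((wk u).map f)
    refine ⟨⟨fun u => (f u, sgn u), fun h => f.map_rel h⟩, ?_⟩
    intro u v huv
    have hcomp : (G.connectedComponentMk v).out = (G.connectedComponentMk u).out := by
      rw [SimpleGraph.ConnectedComponent.connectedComponentMk_eq_of_adj huv]
    set r := (G.connectedComponentMk u).out with hr
    let W : G.Walk r r :=
      (wk u).append (Walk.cons huv (((wk v).copy hcomp rfl).reverse))
    have hW := hf r W
    rw [Walk.map_append, Walk.map_cons, ← Walk.reverse_map, Walk.map_copy] at hW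
    rw [walkSign_append, walkSign_cons, walkSign_reverse, walkSign_copy,
      walkSign_append, walkSign_cons, walkSign_reverse, walkSign_copy] at hW
    show DSGSign π s((f u, sgn u), (f v, sgn v)) = σ s(u, v)
    rw [DSGSign_mk]
    exact units_key2 _ _ _ _ _ _ hW
  · rintro ⟨f, hf⟩
    refine ⟨⟨fun u => (f u).1, fun h => f.map_rel h⟩, ?_⟩
    have key : ∀ (u v : U) (w : G.Walk u v),
        walkSign π (w.map ⟨fun u => (f u).1, fun h => f.map_rel h⟩) =
          (f u).2 * (f v).2 * walkSign σ w := by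
      intro u v w
      induction w with
      | nil => simp [walkSign_nil, Int.units_mul_self]
      | @cons a b c h p ih =>
        rw [Walk.map_cons, walkSign_cons, walkSign_cons, ih]
        have hσ := hf a b h
        rw [DSGSign_mk] at hσ
        exact units_key3 _ _ _ _ _ _ hσ
    intro u w
    rw [key u u w, Int.units_mul_self, one_mul]
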